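/- Let f ∈ L^p_loc(ℝ^D) be nonnegative with p ∈ [1,∞) and α > 0. Define the singular set Sing_α(f) = { x ∈ ℝ^D : S_α(f)(x) = 0 }. If 0 < pα < D, then the (D − pα)-dimensional Hausdorff measure of Sing_α(f) is zero. If pα ≥ D, then Sing_α(f) is empty. -/

import Mathlib

open MeasureTheory Metric ENNReal Filter

noncomputable def ballAvg {D : ℕ} (f : EuclideanSpace ℝ (Fin D) → ℝ≥0∞) (ρ : ℝ)
    (x : EuclideanSpace ℝ (Fin D)) : ℝ≥0∞ :=
  (∫⁻ y in Metric.ball x ρ, f y) / volume (Metric.ball x ρ)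

noncomputable def scaleOp {D : ℕ} (α : ℝ) (f : EuclideanSpace ℝ (Fin D) → ℝ≥0∞)
    (x : EuclideanSpace ℝ (Fin D)) : ℝ≥0∞ :=
  sInf {s : ℝ≥0∞ | ∃ ρ : ℝ, 0 < ρ ∧ s = ENNReal.ofReal ρ ∧
    ENNReal.ofReal ρ ^ (-α) < ballAvg f ρ x}

noncomputable def avgOp {D : ℕ} (α : ℝ) (f : EuclideanSpace ℝ (Fin D) → ℝ≥0∞)
    (x : EuclideanSpace ℝ (Fin D)) : ℝ≥0∞ :=
  scaleOp α f x ^ (-α)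

/-- From `scaleOp α f x = 0`, arbitrarily small good radii exist. -/
lemma exists_rho {D : ℕ} {α : ℝ} {f : EuclideanSpace ℝ (Fin D) → ℝ≥0∞}
    {x : EuclideanSpace ℝ (Fin D)} (hx : scaleOp α f x = 0) {δ : ℝ} (hδ : 0 < δ) :
    ∃ ρ : ℝ, 0 < ρ ∧ ρ < δ ∧ ENNReal.ofReal ρ ^ (-α) < ballAvg f ρ x := by
  have h : scaleOp α f x < ENNReal.ofReal δ := by
    rw [hx]; exact ENNReal.ofReal_pos.2 hδ
  rw [scaleOp, sInf_lt_iff] at h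
  obtain ⟨a, ⟨ρ, hρ0, rfl, hlt⟩, ha⟩ := h
  exact ⟨ρ, hρ0, by rwa [ENNReal.ofReal_lt_ofReal_iff hδ] at ha, hlt⟩

lemma rpow_neg_anti {a b : ℝ≥0∞} {t : ℝ} (h : a ≤ b) (ht : 0 ≤ t) : b ^ (-t) ≤ a ^ (-t) := by
  rw [ENNReal.rpow_neg, ENNReal.rpow_neg]
  exact ENNReal.inv_le_inv.2 (ENNReal.rpow_le_rpow h ht)

lemma exists_delta (A : ℝ≥0∞) (hA : A ≠ ∞) {α : ℝ} (hα : 0 < α) :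
    ∃ δ : ℝ, 0 < δ ∧ A ≤ ENNReal.ofReal δ ^ (-α) := by
  set B := A.toReal + 1 with hBdef
  have hB : 0 < B := by positivity
  refine ⟨B ^ (-α⁻¹), by positivity, ?_⟩
  rw [ENNReal.ofReal_rpow_of_pos (by positivity), ← Real.rpow_mul hB.le,
    show (-α⁻¹) * (-α) = 1 by field_simp, Real.rpow_one]
  calc A = ENNReal.ofReal A.toReal := (ENNReal.ofReal_toReal hA).symm
    _ ≤ ENNReal.ofReal B := ENNReal.ofReal_le_ofReal (by simp [hBdef])

/-- Hölder: a large average of `f` forces a large integral of `f ^ p`. -/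
lemma key_est {D : ℕ} {f : EuclideanSpace ℝ (Fin D) → ℝ≥0∞} (hf : Measurable f)
    {p α : ℝ} (hp : 1 ≤ p) {x : EuclideanSpace ℝ (Fin D)} {ρ : ℝ} (hρ : 0 < ρ)
    (h : ENNReal.ofReal ρ ^ (-α) < ballAvg f ρ x) :
    ENNReal.ofReal ρ ^ (-(p * α)) * volume (Metric.ball x ρ)
      < ∫⁻ y in Metric.ball x ρ, f y ^ p := by
  set V := volume (Metric.ball x ρ) with hVdef
  have hV0 : V ≠ 0 := (measure_ball_pos volume x hρ).ne'
  have hVt : V ≠ ∞ := measure_ball_lt_top.ne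
  set I := ∫⁻ y in Metric.ball x ρ, f y with hIdef
  set J := ∫⁻ y in Metric.ball x ρ, f y ^ p with hJdef
  have hp0 : (0 : ℝ) < p := lt_of_lt_of_le one_pos hp
  have h1 : ENNReal.ofReal ρ ^ (-α) * V < I := by
    rw [ballAvg] at h
    exact (ENNReal.lt_div_iff_mul_lt (Or.inl hV0) (Or.inl hVt)).1 h
  have h2 : I ^ p ≤ J * V ^ (p - 1) := by
    rcases eq_or_lt_of_le hp with hp1 | hp1
    · subst hp1
      simp only [ENNReal.rpow_one, sub_self, ENNReal.rpow_zero, mul_one]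
      refine le_of_eq (lintegral_congr fun y => ?_)
      exact (ENNReal.rpow_one _).symm
    · set q := p.conjExponent with hq
      have hpq : p.HolderConjugate q := Real.HolderConjugate.conjExponent hp1
      have hold := ENNReal.lintegral_mul_le_Lp_mul_Lq (volume.restrict (Metric.ball x ρ)) hpq
        hf.aemeasurable (aemeasurable_const (b := (1 : ℝ≥0∞)))
      simp only [Pi.mul_apply, mul_one, ENNReal.one_rpow, lintegral_one,
        Measure.restrict_apply_univ] at hold
      have hqe : (1 / q) * p = p - 1 := by
        have h3 : p⁻¹ + q⁻¹ = 1 := by simpa using hpq.inv_add_inv_eq_inv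
        have hq1 : 1 / q = 1 - 1 / p := by rw [one_div, one_div]; linarith
        rw [hq1]; field_simp
      calc I ^ p ≤ ((∫⁻ y in Metric.ball x ρ, f y ^ p) ^ (1 / p) * V ^ (1 / q)) ^ p :=
            ENNReal.rpow_le_rpow hold hp0.le
        _ = J ^ ((1 / p) * p) * V ^ ((1 / q) * p) := by
            rw [ENNReal.mul_rpow_of_nonneg _ _ hp0.le, ← ENNReal.rpow_mul, ← ENNReal.rpow_mul]
        _ = J * V ^ (p - 1) := by
            rw [one_div_mul_cancel hp0.ne', ENNReal.rpow_one, hqe]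
  have h3 : (ENNReal.ofReal ρ ^ (-α) * V) ^ p < J * V ^ (p - 1) :=
    lt_of_lt_of_le (ENNReal.rpow_lt_rpow h1 hp0) h2
  have hL : (ENNReal.ofReal ρ ^ (-α) * V) ^ p
      = (ENNReal.ofReal ρ ^ (-(p * α)) * V) * V ^ (p - 1) := by
    rw [ENNReal.mul_rpow_of_nonneg _ _ hp0.le, ← ENNReal.rpow_mul]
    have e2 : V ^ p = V * V ^ (p - 1) := by
      calc V ^ p = V ^ ((1 : ℝ) + (p - 1)) := by rw [show (1 : ℝ) + (p - 1) = p by ring]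
        _ = V ^ (1 : ℝ) * V ^ (p - 1) := ENNReal.rpow_add _ _ hV0 hVt
        _ = V * V ^ (p - 1) := by rw [ENNReal.rpow_one]
    rw [show -α * p = -(p * α) by ring, e2]
    ring
  rw [hL] at h3
  have hVp0 : V ^ (p - 1) ≠ 0 := by
    simp only [ne_eq, ENNReal.rpow_eq_zero_iff, not_or, not_and]
    exact ⟨fun h => absurd h hV0, fun h => absurd h hVt⟩
  have hVpt : V ^ (p - 1) ≠ ∞ := ENNReal.rpow_ne_top_of_nonneg (by linarith) hVt
  exact (ENNReal.mul_lt_mul_iff_left hVp0 hVpt).1 h3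

lemma vol_ball {D : ℕ} (hD : 0 < D) (x : EuclideanSpace ℝ (Fin D)) {ρ : ℝ} (hρ : 0 < ρ) :
    volume (Metric.ball x ρ)
      = ENNReal.ofReal ρ ^ (D : ℝ) * volume (Metric.ball (0 : EuclideanSpace ℝ (Fin D)) 1) := by
  haveI : Nontrivial (EuclideanSpace ℝ (Fin D)) :=
    Module.nontrivial_of_finrank_pos (R := ℝ) (by simpa [finrank_euclideanSpace_fin])
  rw [Measure.addHaar_ball volume x hρ.le, finrank_euclideanSpace_fin,
    ENNReal.ofReal_pow hρ.le, ← ENNReal.rpow_natCast]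

lemma ball_growth {D : ℕ} (hD : 0 < D) {f : EuclideanSpace ℝ (Fin D) → ℝ≥0∞} (hf : Measurable f)
    {p α : ℝ} (hp : 1 ≤ p) {x : EuclideanSpace ℝ (Fin D)} {ρ : ℝ} (hρ : 0 < ρ)
    (h : ENNReal.ofReal ρ ^ (-α) < ballAvg f ρ x) :
    volume (Metric.ball (0 : EuclideanSpace ℝ (Fin D)) 1) * ENNReal.ofReal ρ ^ ((D : ℝ) - p * α)
      < ∫⁻ y in Metric.ball x ρ, f y ^ p := by
  have hkey := key_est hf hp hρ h
  rw [vol_ball hD x hρ] at hkey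
  have h0 : (ENNReal.ofReal ρ) ≠ 0 := (ENNReal.ofReal_pos.2 hρ).ne'
  have e : ENNReal.ofReal ρ ^ ((D : ℝ) - p * α)
      = ENNReal.ofReal ρ ^ (D : ℝ) * ENNReal.ofReal ρ ^ (-(p * α)) := by
    rw [sub_eq_add_neg, ENNReal.rpow_add _ _ h0 ENNReal.ofReal_ne_top]
  calc volume (Metric.ball (0 : EuclideanSpace ℝ (Fin D)) 1)
        * ENNReal.ofReal ρ ^ ((D : ℝ) - p * α)
      = ENNReal.ofReal ρ ^ (-(p * α))
        * (ENNReal.ofReal ρ ^ (D : ℝ) * volume (Metric.ball (0 : EuclideanSpace ℝ (Fin D)) 1)) := by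
        rw [e]; ring
    _ < ∫⁻ y in Metric.ball x ρ, f y ^ p := hkey

lemma ediam_cb {D : ℕ} (x : EuclideanSpace ℝ (Fin D)) {r : ℝ} :
    EMetric.diam (Metric.closedBall x r) ≤ ENNReal.ofReal (2 * r) := by
  refine EMetric.diam_le fun y hy z hz => ?_
  rw [edist_dist]
  refine ENNReal.ofReal_le_ofReal ?_
  have h1 : dist y x ≤ r := mem_closedBall.1 hy
  have h2 : dist z x ≤ r := mem_closedBall.1 hz
  calc dist y z ≤ dist y x + dist x z := dist_triangle y x z
    _ ≤ r + r := by rw [dist_comm x z]; linarith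
    _ = 2 * r := by ring


lemma part2 {D : ℕ} {f : EuclideanSpace ℝ (Fin D) → ℝ≥0∞} (hf : Measurable f)
    {p α : ℝ} (hp : 1 ≤ p) (hα : 0 < α)
    (hloc : ∀ K : Set (EuclideanSpace ℝ (Fin D)), IsCompact K → ∫⁻ y in K, f y ^ p < ⊤)
    (hpα : (D : ℝ) ≤ p * α) :
    {x : EuclideanSpace ℝ (Fin D) | scaleOp α f x = 0} = ∅ := by
  rw [Set.eq_empty_iff_forall_notMem]
  intro x hx
  simp only [Set.mem_setOf_eq] at hx
  rcases Nat.eq_zero_or_pos D with hD | hD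
  · -- zero-dimensional case: the space is a single point
    subst hD
    haveI : Subsingleton (EuclideanSpace ℝ (Fin 0)) :=
      ⟨fun a b => PiLp.ext fun i => Fin.elim0 i⟩
    have hball : ∀ ρ : ℝ, 0 < ρ → Metric.ball x ρ = Set.univ := by
      intro ρ hρ
      refine Set.eq_univ_of_forall fun y => ?_
      simpa [Metric.mem_ball, Subsingleton.elim y x] using hρ
    have hcb : Metric.closedBall x 1 = Set.univ := by
      refine Set.eq_univ_of_forall fun y => ?_
      simp [Metric.mem_closedBall, Subsingleton.elim y x]
    set M := ∫⁻ y in Set.univ, f y ^ p with hMdef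
    have hM : M ≠ ∞ := by
      rw [hMdef, ← hcb]
      exact (hloc _ (isCompact_closedBall x 1)).ne
    set V0 := volume (Metric.ball x 1) with hV0def
    have hV00 : V0 ≠ 0 := (measure_ball_pos volume x one_pos).ne'
    have hV0t : V0 ≠ ∞ := measure_ball_lt_top.ne
    set C := 1 + M / V0 with hCdef
    have hC : C ≠ ∞ := by
      rw [hCdef]
      exact ENNReal.add_ne_top.2 ⟨ENNReal.one_ne_top, (ENNReal.div_lt_top hM hV00).ne⟩
    have hbound : ∀ ρ : ℝ, 0 < ρ → ballAvg f ρ x ≤ C := by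
      intro ρ hρ
      rw [ballAvg, hball ρ hρ]
      have hI : (∫⁻ y in Set.univ, f y) ≤ V0 + M := by
        have hpt : ∀ y, f y ≤ 1 + f y ^ p := by
          intro y
          rcases le_total (f y) 1 with h | h
          · exact h.trans le_self_add
          · calc f y = f y ^ (1 : ℝ) := (ENNReal.rpow_one _).symm
              _ ≤ f y ^ p := ENNReal.rpow_le_rpow_of_exponent_le h hp
              _ ≤ 1 + f y ^ p := le_add_self
        calc (∫⁻ y in Set.univ, f y) ≤ ∫⁻ y in Set.univ, (1 + f y ^ p) :=
              lintegral_mono hpt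
          _ = (∫⁻ _ in Set.univ, (1 : ℝ≥0∞)) + M := by
              rw [lintegral_add_left measurable_const]
          _ = volume (Set.univ : Set (EuclideanSpace ℝ (Fin 0))) + M := by
              rw [setLIntegral_one]
          _ = V0 + M := by rw [hV0def, hball 1 one_pos]
      rw [show volume (Set.univ : Set (EuclideanSpace ℝ (Fin 0))) = V0 by
        rw [hV0def, hball 1 one_pos]]
      calc (∫⁻ y in Set.univ, f y) / V0 ≤ (V0 + M) / V0 :=
            ENNReal.div_le_div_right hI V0
        _ = V0 / V0 + M / V0 := ENNReal.add_div
        _ = C := by rw [ENNReal.div_self hV00 hV0t, hCdef]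
    obtain ⟨δ, hδ0, hδ⟩ := exists_delta C hC hα
    obtain ⟨ρ, hρ0, hρδ, hlt⟩ := exists_rho hx hδ0
    have : ENNReal.ofReal ρ ^ (-α) < ENNReal.ofReal ρ ^ (-α) :=
      calc ENNReal.ofReal ρ ^ (-α) < ballAvg f ρ x := hlt
        _ ≤ C := hbound ρ hρ0
        _ ≤ ENNReal.ofReal δ ^ (-α) := hδ
        _ ≤ ENNReal.ofReal ρ ^ (-α) :=
            rpow_neg_anti (ENNReal.ofReal_le_ofReal hρδ.le) hα.le
    exact absurd this (lt_irrefl _)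
  · -- positive-dimensional case
    set c := volume (Metric.ball (0 : EuclideanSpace ℝ (Fin D)) 1) with hcdef
    have hc0 : c ≠ 0 := (measure_ball_pos volume 0 one_pos).ne'
    have hfp : Measurable fun y => f y ^ p :=
      (ENNReal.continuous_rpow_const.measurable).comp hf
    set ν := volume.withDensity fun y => f y ^ p with hνdef
    have hseq : ∀ n : ℕ, c < ν (Metric.closedBall x (1 / (n + 1))) := by
      intro n
      have hmin : (0 : ℝ) < min 1 (1 / ((n : ℝ) + 1)) := by positivity
      obtain ⟨ρ, hρ0, hρδ, hlt⟩ := exists_rho hx hmin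
      have hρ1 : ρ ≤ 1 := (hρδ.trans_le (min_le_left _ _)).le
      have hgrow := ball_growth hD hf hp hρ0 hlt
      have hone : (1 : ℝ≥0∞) ≤ ENNReal.ofReal ρ ^ ((D : ℝ) - p * α) := by
        have : ENNReal.ofReal ρ ^ ((D : ℝ) - p * α)
            = ENNReal.ofReal ρ ^ (-(p * α - D)) := by ring_nf
        rw [this]
        calc (1 : ℝ≥0∞) = (1 : ℝ≥0∞) ^ (-(p * α - (D : ℝ))) := (ENNReal.one_rpow _).symm
          _ ≤ ENNReal.ofReal ρ ^ (-(p * α - (D : ℝ))) := by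
              refine rpow_neg_anti ?_ (by linarith)
              exact ENNReal.ofReal_le_one.2 hρ1
      calc c = c * 1 := (mul_one c).symm
        _ ≤ c * ENNReal.ofReal ρ ^ ((D : ℝ) - p * α) := by
            exact mul_le_mul_right hone c
        _ < ∫⁻ y in Metric.ball x ρ, f y ^ p := hgrow
        _ ≤ ∫⁻ y in Metric.closedBall x (1 / (n + 1)), f y ^ p := by
            refine lintegral_mono_set ?_
            exact (Metric.ball_subset_closedBall).trans
              (Metric.closedBall_subset_closedBall (hρδ.trans_le (min_le_right _ _)).le)
        _ = ν (Metric.closedBall x (1 / (n + 1))) := by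
            rw [hνdef, withDensity_apply _ measurableSet_closedBall]
    -- but ν (closedBall x (1/(n+1))) → ν {x} = 0
    have hanti : Antitone fun n : ℕ => Metric.closedBall x (1 / (n + 1 : ℝ)) := by
      intro m n hmn
      refine Metric.closedBall_subset_closedBall ?_
      have : (m : ℝ) + 1 ≤ (n : ℝ) + 1 := by exact_mod_cast Nat.succ_le_succ hmn
      exact one_div_le_one_div_of_le (by positivity) this
    have hInter : (⋂ n : ℕ, Metric.closedBall x (1 / (n + 1 : ℝ))) = {x} := by
      ext y
      simp only [Set.mem_iInter, Metric.mem_closedBall, Set.mem_singleton_iff]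
      constructor
      · intro h
        have hle : dist y x ≤ 0 :=
          ge_of_tendsto' tendsto_one_div_add_atTop_nhds_zero_nat fun n => h n
        exact dist_le_zero.1 hle
      · rintro rfl
        intro n
        simp [dist_self]
        positivity
    haveI : Nontrivial (EuclideanSpace ℝ (Fin D)) :=
      Module.nontrivial_of_finrank_pos (R := ℝ) (by simpa [finrank_euclideanSpace_fin])
    have hsing : ν {x} = 0 := by
      rw [hνdef, withDensity_apply _ (measurableSet_singleton x)]
      have hvol : volume ({x} : Set (EuclideanSpace ℝ (Fin D))) = 0 := by
        rw [← Metric.sphere_zero (x := x)]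
        exact Measure.addHaar_sphere volume x 0
      exact setLIntegral_measure_zero _ _ hvol
    have hfin : ν (Metric.closedBall x (1 / ((0 : ℕ) + 1 : ℝ))) ≠ ⊤ := by
      rw [hνdef, withDensity_apply _ measurableSet_closedBall]
      exact (hloc _ (isCompact_closedBall x _)).ne
    have htend := MeasureTheory.tendsto_measure_iInter_atTop
      (μ := ν) (s := fun n : ℕ => Metric.closedBall x (1 / (n + 1 : ℝ)))
      (fun n => measurableSet_closedBall.nullMeasurableSet) hanti ⟨0, hfin⟩
    rw [hInter, hsing] at htend
    have hev := htend.eventually_lt_const (pos_iff_ne_zero.2 hc0)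
    obtain ⟨n, hn⟩ := hev.exists
    exact absurd ((hseq n).trans hn) (lt_irrefl _)


lemma part1 {D : ℕ} {f : EuclideanSpace ℝ (Fin D) → ℝ≥0∞} (hf : Measurable f)
    {p α : ℝ} (hp : 1 ≤ p) (hα : 0 < α)
    (hloc : ∀ K : Set (EuclideanSpace ℝ (Fin D)), IsCompact K → ∫⁻ y in K, f y ^ p < ⊤)
    (hpα : p * α < D) :
    MeasureTheory.Measure.hausdorffMeasure ((D : ℝ) - p * α)
      {x : EuclideanSpace ℝ (Fin D) | scaleOp α f x = 0} = 0 := by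
  have hpα0 : 0 < p * α := by nlinarith
  have hDR : (0 : ℝ) < (D : ℝ) := lt_trans hpα0 hpα
  have hD : 0 < D := by exact_mod_cast hDR
  set s := (D : ℝ) - p * α with hsdef
  have hs : 0 < s := by rw [hsdef]; linarith
  haveI : Nontrivial (EuclideanSpace ℝ (Fin D)) :=
    Module.nontrivial_of_finrank_pos (R := ℝ) (by simpa [finrank_euclideanSpace_fin])
  set c := volume (Metric.ball (0 : EuclideanSpace ℝ (Fin D)) 1) with hcdef
  have hc0 : c ≠ 0 := (measure_ball_pos volume 0 one_pos).ne'
  have hct : c ≠ ∞ := measure_ball_lt_top.ne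
  have hfp : Measurable fun y => f y ^ p :=
    (ENNReal.continuous_rpow_const.measurable).comp hf
  set μ' := volume.withDensity fun y => f y ^ p with hμ'def
  haveI hlocfin : IsLocallyFiniteMeasure μ' := by
    constructor
    intro x
    refine ⟨Metric.closedBall x 1, closedBall_mem_nhds x one_pos, ?_⟩
    rw [hμ'def, withDensity_apply _ measurableSet_closedBall]
    exact hloc _ (isCompact_closedBall x 1)
  -- Step 1: the singular set is Lebesgue-null
  have hvol : volume {x : EuclideanSpace ℝ (Fin D) | scaleOp α f x = 0} = 0 := by
    have hae := (Besicovitch.ae_tendsto_rnDeriv μ' volume).and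
      (Measure.rnDeriv_lt_top μ' volume)
    refine measure_mono_null (fun x hx => ?_) (ae_iff.1 hae)
    simp only [Set.mem_setOf_eq] at hx ⊢
    intro hP
    obtain ⟨hPt, hPlt⟩ := hP
    set L := μ'.rnDeriv volume x with hLdef
    have hxseq : ∀ n : ℕ, ∃ ρ : ℝ, 0 < ρ ∧ ρ < 1 / ((n : ℝ) + 1) ∧
        ENNReal.ofReal ρ ^ (-α) < ballAvg f ρ x := fun n => exists_rho hx (by positivity)
    choose ρ hρ0 hρlt hρgood using hxseq
    have hcbvol : ∀ n, volume (Metric.closedBall x (ρ n)) = volume (Metric.ball x (ρ n)) := by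
      intro n
      refine le_antisymm ?_ (measure_mono Metric.ball_subset_closedBall)
      calc volume (Metric.closedBall x (ρ n))
          = volume (Metric.ball x (ρ n) ∪ Metric.sphere x (ρ n)) := by
            rw [Metric.ball_union_sphere]
        _ ≤ volume (Metric.ball x (ρ n)) + volume (Metric.sphere x (ρ n)) :=
            measure_union_le _ _
        _ = volume (Metric.ball x (ρ n)) := by
            rw [Measure.addHaar_sphere volume, add_zero]
    have hrat : ∀ n : ℕ, (ENNReal.ofReal (1 / ((n : ℝ) + 1))) ^ (-(p * α))
        ≤ μ' (Metric.closedBall x (ρ n)) / volume (Metric.closedBall x (ρ n)) := by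
      intro n
      have hkey := key_est hf hp (hρ0 n) (hρgood n)
      have hball : (∫⁻ y in Metric.ball x (ρ n), f y ^ p) ≤ μ' (Metric.closedBall x (ρ n)) := by
        rw [hμ'def, withDensity_apply _ measurableSet_closedBall]
        exact lintegral_mono_set Metric.ball_subset_closedBall
      have hV0 : volume (Metric.closedBall x (ρ n)) ≠ 0 := by
        rw [hcbvol n]; exact (measure_ball_pos volume x (hρ0 n)).ne'
      have hVt : volume (Metric.closedBall x (ρ n)) ≠ ∞ := measure_closedBall_lt_top.ne
      rw [ENNReal.le_div_iff_mul_le (Or.inl hV0) (Or.inl hVt)]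
      calc (ENNReal.ofReal (1 / ((n : ℝ) + 1))) ^ (-(p * α)) * volume (Metric.closedBall x (ρ n))
          ≤ (ENNReal.ofReal (ρ n)) ^ (-(p * α)) * volume (Metric.ball x (ρ n)) := by
            rw [hcbvol n]
            exact mul_le_mul_left
              (rpow_neg_anti (ENNReal.ofReal_le_ofReal (hρlt n).le) hpα0.le) _
        _ ≤ ∫⁻ y in Metric.ball x (ρ n), f y ^ p := hkey.le
        _ ≤ μ' (Metric.closedBall x (ρ n)) := hball
    have hρtend : Tendsto ρ atTop (nhdsWithin 0 (Set.Ioi 0)) := by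
      refine tendsto_nhdsWithin_of_tendsto_nhds_of_eventually_within _ ?_
        (Eventually.of_forall hρ0)
      exact squeeze_zero (fun n => (hρ0 n).le) (fun n => (hρlt n).le)
        tendsto_one_div_add_atTop_nhds_zero_nat
    have hcomp : Tendsto (fun n => μ' (Metric.closedBall x (ρ n))
        / volume (Metric.closedBall x (ρ n))) atTop (nhds L) := hPt.comp hρtend
    have hBtend : Tendsto (fun n : ℕ => (ENNReal.ofReal (1 / ((n : ℝ) + 1))) ^ (-(p * α)))
        atTop (nhds ⊤) := by
      have h1 : Tendsto (fun n : ℕ => ENNReal.ofReal (1 / ((n : ℝ) + 1))) atTop (nhds 0) := by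
        have := ENNReal.tendsto_ofReal tendsto_one_div_add_atTop_nhds_zero_nat
        simpa using this
      have h2 := (ENNReal.continuous_rpow_const (y := -(p * α))).tendsto 0
      have h3 := h2.comp h1
      rwa [ENNReal.zero_rpow_of_neg (by linarith)] at h3
    have htop : (⊤ : ℝ≥0∞) ≤ L := le_of_tendsto_of_tendsto' hBtend hcomp hrat
    exact absurd (lt_of_le_of_lt htop hPlt) (lt_irrefl _)
  -- Step 2: also `μ'`-null
  have hμ'null : μ' {x : EuclideanSpace ℝ (Fin D) | scaleOp α f x = 0} = 0 :=
    withDensity_absolutelyContinuous volume _ hvol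
  -- Step 3: covering argument, locally
  have hR : ∀ R : ℕ, μH[s] ({x : EuclideanSpace ℝ (Fin D) | scaleOp α f x = 0}
      ∩ Metric.closedBall 0 R) = 0 := by
    intro R
    set T := {x : EuclideanSpace ℝ (Fin D) | scaleOp α f x = 0}
      ∩ Metric.closedBall (0 : EuclideanSpace ℝ (Fin D)) R with hTdef
    have hTnull : μ' T = 0 :=
      le_antisymm ((measure_mono Set.inter_subset_left).trans hμ'null.le) zero_le
    have main : ∀ n : ℕ, ∃ v : Set (EuclideanSpace ℝ (Fin D)), v.Countable ∧
        ∃ rad : EuclideanSpace ℝ (Fin D) → ℝ,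
          (∀ b ∈ v, EMetric.diam (Metric.closedBall b (rad b))
            ≤ ENNReal.ofReal (8 / ((n : ℝ) + 1))) ∧
          (T ⊆ ⋃ b ∈ v, Metric.closedBall b (rad b)) ∧
          ((∑' b : v, EMetric.diam (Metric.closedBall (b : EuclideanSpace ℝ (Fin D)) (rad b)) ^ s)
            ≤ ENNReal.ofReal 8 ^ s * ((2 : ℝ≥0∞)⁻¹) ^ n) := by
      intro n
      set ε := c * ((2 : ℝ≥0∞)⁻¹) ^ n with hεdef
      have hε : μ' T < ε := by
        rw [hTnull]
        refine pos_iff_ne_zero.2 (mul_ne_zero hc0 (pow_ne_zero _ ?_))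
        simp
      obtain ⟨U, hTU, hUopen, hUε⟩ := Set.exists_isOpen_lt_of_lt T ε hε
      have hy : ∀ y ∈ T, ∃ r : ℝ, 0 < r ∧ r ≤ 1 / ((n : ℝ) + 1) ∧
          Metric.closedBall y r ⊆ U ∧ c * ENNReal.ofReal r ^ s < μ' (Metric.ball y r) := by
        intro y hyT
        obtain ⟨η, hη0, hηU⟩ := Metric.isOpen_iff.1 hUopen y (hTU hyT)
        have hδ : 0 < min (1 / ((n : ℝ) + 1)) (η / 2) := by positivity
        obtain ⟨r, hr0, hrδ, hgood⟩ := exists_rho hyT.1 hδ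
        refine ⟨r, hr0, (hrδ.trans_le (min_le_left _ _)).le, ?_, ?_⟩
        · refine (Metric.closedBall_subset_ball ?_).trans hηU
          have := hrδ.trans_le (min_le_right _ _)
          linarith
        · have hgrow := ball_growth hD hf hp hr0 hgood
          rw [hμ'def, withDensity_apply _ measurableSet_ball]
          calc c * ENNReal.ofReal r ^ s
              = volume (Metric.ball (0 : EuclideanSpace ℝ (Fin D)) 1)
                * ENNReal.ofReal r ^ ((D : ℝ) - p * α) := by rw [hcdef, hsdef]
            _ < _ := hgrow
      choose! rad hrad0 hrad1 hradU hradE using hy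
      obtain ⟨u, huT, hdisj, hcov⟩ :=
        Vitali.exists_disjoint_subfamily_covering_enlargement_closedBall T id rad
          (1 / ((n : ℝ) + 1)) (fun a ha => hrad1 a ha) 4 (by norm_num)
      have hdisj' : u.PairwiseDisjoint fun a => Metric.ball a (rad a) :=
        hdisj.mono fun a => Metric.ball_subset_closedBall
      have hucnt : u.Countable :=
        hdisj'.countable_of_isOpen (fun a _ => isOpen_ball)
          (fun a ha => ⟨a, mem_ball_self (hrad0 a (huT ha))⟩)
      refine ⟨u, hucnt, fun b => 4 * rad b, ?_, ?_, ?_⟩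
      · intro b hb
        have h1 : rad b ≤ 1 / ((n : ℝ) + 1) := hrad1 b (huT hb)
        calc EMetric.diam (Metric.closedBall b (4 * rad b))
            ≤ ENNReal.ofReal (2 * (4 * rad b)) := ediam_cb b
          _ ≤ ENNReal.ofReal (8 / ((n : ℝ) + 1)) := by
              refine ENNReal.ofReal_le_ofReal ?_
              have h2 : 8 / ((n : ℝ) + 1) = 8 * (1 / ((n : ℝ) + 1)) := by ring
              rw [h2]; linarith
      · intro a ha
        obtain ⟨b, hb, hsub⟩ := hcov a ha
        exact Set.mem_biUnion hb (hsub (Metric.mem_closedBall_self (hrad0 a ha).le))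
      · have hterm : ∀ b : u, EMetric.diam
            (Metric.closedBall (b : EuclideanSpace ℝ (Fin D)) (4 * rad b)) ^ s
            ≤ ENNReal.ofReal 8 ^ s
              * (c⁻¹ * μ' (Metric.ball (b : EuclideanSpace ℝ (Fin D)) (rad b))) := by
          rintro ⟨b, hb⟩
          have h1 : EMetric.diam (Metric.closedBall b (4 * rad b)) ^ s
              ≤ (ENNReal.ofReal (8 * rad b)) ^ s := by
            refine ENNReal.rpow_le_rpow ?_ hs.le
            calc EMetric.diam (Metric.closedBall b (4 * rad b))
                ≤ ENNReal.ofReal (2 * (4 * rad b)) := ediam_cb b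
              _ = ENNReal.ofReal (8 * rad b) := by ring_nf
          have h2 : (ENNReal.ofReal (8 * rad b)) ^ s
              = ENNReal.ofReal 8 ^ s * ENNReal.ofReal (rad b) ^ s := by
            rw [ENNReal.ofReal_mul (by norm_num), ENNReal.mul_rpow_of_nonneg _ _ hs.le]
          have h3 : ENNReal.ofReal (rad b) ^ s
              ≤ c⁻¹ * μ' (Metric.ball b (rad b)) := by
            have hE := (hradE b (huT hb)).le
            calc ENNReal.ofReal (rad b) ^ s
                = c⁻¹ * (c * ENNReal.ofReal (rad b) ^ s) := by
                  rw [← mul_assoc, ENNReal.inv_mul_cancel hc0 hct, one_mul]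
              _ ≤ c⁻¹ * μ' (Metric.ball b (rad b)) := mul_le_mul_right hE _
          calc EMetric.diam (Metric.closedBall b (4 * rad b)) ^ s
              ≤ (ENNReal.ofReal (8 * rad b)) ^ s := h1
            _ = ENNReal.ofReal 8 ^ s * ENNReal.ofReal (rad b) ^ s := h2
            _ ≤ ENNReal.ofReal 8 ^ s * (c⁻¹ * μ' (Metric.ball b (rad b))) :=
                mul_le_mul_right h3 _
        calc (∑' b : u, EMetric.diam
              (Metric.closedBall (b : EuclideanSpace ℝ (Fin D)) (4 * rad b)) ^ s)
            ≤ ∑' b : u, ENNReal.ofReal 8 ^ s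
              * (c⁻¹ * μ' (Metric.ball (b : EuclideanSpace ℝ (Fin D)) (rad b))) :=
              ENNReal.tsum_le_tsum hterm
          _ = ENNReal.ofReal 8 ^ s * (c⁻¹
              * ∑' b : u, μ' (Metric.ball (b : EuclideanSpace ℝ (Fin D)) (rad b))) := by
              rw [ENNReal.tsum_mul_left, ENNReal.tsum_mul_left]
          _ ≤ ENNReal.ofReal 8 ^ s * (c⁻¹ * μ' U) := by
              refine mul_le_mul_right (mul_le_mul_right ?_ _) _
              rw [← measure_biUnion hucnt hdisj' (fun b _ => measurableSet_ball)]
              refine measure_mono (Set.iUnion₂_subset fun b hb => ?_)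
              exact Metric.ball_subset_closedBall.trans (hradU b (huT hb))
          _ ≤ ENNReal.ofReal 8 ^ s * (c⁻¹ * (c * ((2 : ℝ≥0∞)⁻¹) ^ n)) :=
              mul_le_mul_right (mul_le_mul_right hUε.le _) _
          _ = ENNReal.ofReal 8 ^ s * ((2 : ℝ≥0∞)⁻¹) ^ n := by
              rw [← mul_assoc c⁻¹, ENNReal.inv_mul_cancel hc0 hct, one_mul]
    choose v hvc rad h1 h2 h3 using main
    haveI : ∀ n, Countable (v n) := fun n => (hvc n).to_subtype
    refine le_antisymm ?_ zero_le
    have hrtend : Tendsto (fun n : ℕ => ENNReal.ofReal (8 / ((n : ℝ) + 1))) atTop (nhds 0) := by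
      have h8 : Tendsto (fun n : ℕ => 8 * (1 / ((n : ℝ) + 1))) atTop (nhds (8 * 0)) :=
        tendsto_one_div_add_atTop_nhds_zero_nat.const_mul 8
      have := ENNReal.tendsto_ofReal (m := fun n : ℕ => 8 / ((n : ℝ) + 1))
        (by simpa [div_eq_mul_inv] using h8)
      simpa using this
    have hbd := MeasureTheory.Measure.hausdorffMeasure_le_liminf_tsum
      (X := EuclideanSpace ℝ (Fin D)) s T
      (l := atTop) (fun n : ℕ => ENNReal.ofReal (8 / ((n : ℝ) + 1))) hrtend
      (fun n (b : v n) => Metric.closedBall (b : EuclideanSpace ℝ (Fin D)) (rad n b))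
      (Eventually.of_forall fun n b => h1 n b b.2)
      (Eventually.of_forall fun n a ha => by
        obtain ⟨b, hb, hmem⟩ := Set.mem_iUnion₂.1 (h2 n ha)
        exact Set.mem_iUnion.2 ⟨⟨b, hb⟩, hmem⟩)
    refine le_trans hbd (le_antisymm ?_ zero_le).le
    have hBtend : Tendsto (fun n : ℕ => ENNReal.ofReal 8 ^ s * ((2 : ℝ≥0∞)⁻¹) ^ n)
        atTop (nhds 0) := by
      have h8 : ENNReal.ofReal 8 ^ s ≠ ⊤ :=
        ENNReal.rpow_ne_top_of_nonneg hs.le ENNReal.ofReal_ne_top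
      have hpow : Tendsto (fun n : ℕ => ((2 : ℝ≥0∞)⁻¹) ^ n) atTop (nhds 0) :=
        ENNReal.tendsto_pow_atTop_nhds_zero_of_lt_one (ENNReal.inv_lt_one.2 one_lt_two)
      have := ENNReal.Tendsto.const_mul hpow (Or.inr h8)
      simpa using this
    calc liminf (fun n => ∑' (b : v n), EMetric.diam
          (Metric.closedBall (b : EuclideanSpace ℝ (Fin D)) (rad n b)) ^ s) atTop
        ≤ liminf (fun n : ℕ => ENNReal.ofReal 8 ^ s * ((2 : ℝ≥0∞)⁻¹) ^ n) atTop :=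
          liminf_le_liminf (Eventually.of_forall fun n => h3 n)
      _ = 0 := hBtend.liminf_eq
  -- assemble
  have hcover : {x : EuclideanSpace ℝ (Fin D) | scaleOp α f x = 0}
      = ⋃ R : ℕ, ({x : EuclideanSpace ℝ (Fin D) | scaleOp α f x = 0}
        ∩ Metric.closedBall 0 R) := by
    ext y
    simp only [Set.mem_iUnion, Set.mem_inter_iff, Metric.mem_closedBall]
    constructor
    · intro hy
      obtain ⟨R, hR'⟩ := exists_nat_ge (dist y 0)
      exact ⟨R, hy, hR'⟩
    · rintro ⟨R, hy, -⟩
      exact hy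
  rw [hcover]
  exact measure_iUnion_null fun R => hR R

theorem stmt5 {D : ℕ} (f : EuclideanSpace ℝ (Fin D) → ℝ≥0∞) (hf : Measurable f)
    {p α : ℝ} (hp : 1 ≤ p) (hα : 0 < α)
    (hloc : ∀ K : Set (EuclideanSpace ℝ (Fin D)), IsCompact K → ∫⁻ y in K, f y ^ p < ⊤) :
    (p * α < D →
      MeasureTheory.Measure.hausdorffMeasure ((D : ℝ) - p * α)
        {x : EuclideanSpace ℝ (Fin D) | scaleOp α f x = 0} = 0) ∧
    ((D : ℝ) ≤ p * α → {x : EuclideanSpace ℝ (Fin D) | scaleOp α f x = 0} = ∅) := by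
  exact ⟨fun h => part1 hf hp hα hloc h, fun h => part2 hf hp hα hloc h⟩
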